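/- If a probability distribution P on ℝ satisfies P(σ) = P(-σ)·e^σ and ⟨σ⟩ = 0, then σ = 0 almost surely (equivalently Var(σ) = 0). -/

import Mathlib

open MeasureTheory Real

lemma aux_sign (σ : ℝ) : 0 ≤ σ * (1 - Real.exp (-σ)) := by
  rcases le_or_gt 0 σ with h | h
  · have : Real.exp (-σ) ≤ 1 := Real.exp_le_one_iff.mpr (by linarith)
    nlinarith
  · have : 1 ≤ Real.exp (-σ) := Real.one_le_exp (by linarith)
    nlinarith

lemma aux_zero (σ : ℝ) (h : σ * (1 - Real.exp (-σ)) = 0) : σ = 0 := by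
  by_contra hne
  rcases lt_or_gt_of_ne hne with h1 | h1
  · have : 1 < Real.exp (-σ) := Real.one_lt_exp_iff.mpr (by linarith)
    nlinarith
  · have : Real.exp (-σ) < 1 := by
      rw [Real.exp_lt_one_iff]; linarith
    nlinarith

/-- If a probability density `p` on ℝ satisfies `p σ = p (-σ) * exp σ` and the mean of σ
is zero, then σ = 0 almost surely, equivalently the variance of σ vanishes. -/
theorem ft_zero_mean_implies_zero_variance
    (p : ℝ → ℝ) (hp_nonneg : ∀ σ, 0 ≤ p σ)
    (hp_norm : ∫ σ, p σ = 1)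
    (hsym : ∀ σ, p σ = p (-σ) * Real.exp σ)
    (hint1 : Integrable (fun σ => σ * p σ))
    (hint2 : Integrable (fun σ => σ ^ 2 * p σ))
    (hmean : ∫ σ, σ * p σ = 0) :
    (∀ᵐ σ, σ * p σ = 0) ∧ ∫ σ, σ ^ 2 * p σ = 0 := by
  -- p(-σ) = p σ * exp(-σ)
  have hsym' : ∀ σ : ℝ, p (-σ) = p σ * Real.exp (-σ) := by
    intro σ
    have h := hsym σ
    have hexp : Real.exp σ ≠ 0 := (Real.exp_pos σ).ne'
    field_simp [Real.exp_neg] at *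
    rw [h, mul_assoc, ← Real.exp_add]; simp
  -- the negated function
  have hneg : (fun σ : ℝ => (-σ) * p (-σ)) = fun σ : ℝ => -(σ * Real.exp (-σ) * p σ) := by
    funext σ; rw [hsym' σ]; ring
  have hint3 : Integrable (fun σ : ℝ => σ * Real.exp (-σ) * p σ) := by
    have := (hint1.comp_neg (μ := volume))
    have h2 : Integrable (fun σ : ℝ => (-σ) * p (-σ)) := this
    rw [hneg] at h2
    have h3 := h2.neg
    simp only [Pi.neg_def, neg_neg] at h3
    exact h3
  have hintval : ∫ σ, σ * Real.exp (-σ) * p σ = 0 := by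
    have h1 : ∫ σ : ℝ, (-σ) * p (-σ) = ∫ σ, σ * p σ :=
      integral_neg_eq_self (fun σ => σ * p σ) volume
    rw [hneg] at h1
    rw [integral_neg] at h1
    linarith [h1, hmean]
  set g : ℝ → ℝ := fun σ => σ * (1 - Real.exp (-σ)) * p σ with hg
  have hg_eq : g = fun σ => σ * p σ - σ * Real.exp (-σ) * p σ := by
    funext σ; simp only [hg]; ring
  have hg_int : Integrable g := by rw [hg_eq]; exact hint1.sub hint3
  have hg_nonneg : ∀ σ, 0 ≤ g σ := fun σ =>
    mul_nonneg (aux_sign σ) (hp_nonneg σ)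
  have hg_intval : ∫ σ, g σ = 0 := by
    rw [hg_eq, integral_sub hint1 hint3, hmean, hintval]; ring
  have hg_ae : ∀ᵐ σ, g σ = 0 := by
    have := (integral_eq_zero_iff_of_nonneg hg_nonneg hg_int).mp hg_intval
    filter_upwards [this] with σ hσ
    exact hσ
  have hae : ∀ᵐ σ, σ * p σ = 0 := by
    filter_upwards [hg_ae] with σ hσ
    rcases mul_eq_zero.mp hσ with h | h
    · rw [aux_zero σ h]; ring
    · rw [h]; ring
  refine ⟨hae, ?_⟩
  have : ∀ᵐ σ, σ ^ 2 * p σ = 0 := by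
    filter_upwards [hae] with σ hσ
    have : σ ^ 2 * p σ = σ * (σ * p σ) := by ring
    rw [this, hσ, mul_zero]
  calc ∫ σ, σ ^ 2 * p σ = ∫ _σ : ℝ, (0:ℝ) := integral_congr_ae this
    _ = 0 := integral_zero _ _
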